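/- arXiv:2101.05179 — 2 statements merged into one kernel-verified Lean document; each statement's English description precedes it below -/
import Mathlib

section
/- Let R be a commutative \mathbb{Q}-algebra and let (a_n)_{n\ge 1}, (b_n)_{n\ge 1}, (c_n)_{n\ge 1}, (d_n)_{n\ge 1} be sequences in R. Set A = 1 + \sum_{n\ge 1} a_n Q^n, B = 1 + \sum_{n\ge 1} b_n Q^n, C = 1 + \sum_{n\ge 1} c_n Q^n, D = 1 + \sum_{n\ge 1} d_n Q^n in R[[Q]]. Then the identity log C = log A + log B - log D holds in R[[Q]] if and only if for every n \ge 1 one has c_n = \sum_{l=1}^{n+1} (-1)^{l-1} \sum_{((i_1,j_1),\dots,(i_l,j_l)) \in S_l(n)} a_{i_l}\, d_{i_1-i_2}\, d_{i_2-i_3} \cdots d_{i_{l-1}-i_l}\, b_{j_1}, where by convention a_0 = b_0 = 1. -/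
open PowerSeries Finset

/-- The set `S_l(n)` of tuples `((i_1,j_1),...,(i_l,j_l))` of pairs of nonnegative
integers with `i_1 > i_2 > ... > i_l` and `i_k + j_k = n` for all `k`. -/
def Sln (l n : ℕ) : Finset (Fin l → ℕ × ℕ) :=
  (Fintype.piFinset fun _ => Finset.range (n + 1) ×ˢ Finset.range (n + 1)).filter
    (fun f => (∀ k : Fin l, (f k).1 + (f k).2 = n) ∧
      ∀ k k' : Fin l, k < k' → (f k').1 < (f k).1)

/-- `∑_{l=1}^{n+1} (-1)^{l-1} ∑_{S_l(n)} a_{i_l} d_{i_1-i_2} ⋯ d_{i_{l-1}-i_l} b_{j_1}`. -/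
def incExcSum {R : Type*} [CommRing R] (a b d : ℕ → R) (n : ℕ) : R :=
  ∑ l ∈ Finset.range (n + 1), (-1 : R) ^ l *
    ∑ f ∈ Sln (l + 1) n,
      a (f (Fin.last l)).1 *
        (∏ k : Fin l, d ((f (Fin.castSucc k)).1 - (f (Fin.succ k)).1)) *
        b (f 0).2

/-- For `f ∈ R[[Q]]` with zero constant term over a `ℚ`-algebra `R`,
`log(1+f) = ∑_{m ≥ 1} (-1)^{m-1} f^m / m`; its `n`-th coefficient is the (finite) sum
`∑_{m=1}^{n} (-1)^{m-1}/m ⬝ coeff_n (f^m)`, since `coeff_n (f^m) = 0` for `m > n`. -/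
noncomputable def logOnePlus {R : Type*} [CommRing R] [Algebra ℚ R]
    (f : PowerSeries R) : PowerSeries R :=
  PowerSeries.mk fun n =>
    ∑ m ∈ Finset.range n, ((-1 : ℚ) ^ m / (m + 1)) • (PowerSeries.coeff n (f ^ (m + 1)))

namespace IncExc

variable {R : Type*} [CommRing R] [Algebra ℚ R]

set_option linter.unusedSectionVars false

lemma mem_Sln {l n : ℕ} {f : Fin l → ℕ × ℕ} :
    f ∈ Sln l n ↔ (∀ k, (f k).1 + (f k).2 = n) ∧
      ∀ k k' : Fin l, k < k' → (f k').1 < (f k).1 := by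
  constructor
  · intro h; exact (Finset.mem_filter.1 h).2
  · intro h
    refine Finset.mem_filter.2 ⟨?_, h⟩
    refine Fintype.mem_piFinset.2 fun k => ?_
    have := h.1 k
    exact Finset.mem_product.2 ⟨Finset.mem_range.2 (by omega), Finset.mem_range.2 (by omega)⟩

/-- The inner sum of `incExcSum`. -/
def T (a b d : ℕ → R) (l n : ℕ) : R :=
  ∑ f ∈ Sln (l + 1) n,
    a (f (Fin.last l)).1 *
      (∏ k : Fin l, d ((f (Fin.castSucc k)).1 - (f (Fin.succ k)).1)) * b (f 0).2

lemma incExcSum_eq (a b d : ℕ → R) (n : ℕ) :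
    incExcSum a b d n = ∑ l ∈ Finset.range (n + 1), (-1 : R) ^ l * T a b d l n := rfl

lemma T_eq_zero (a b d : ℕ → R) {l n : ℕ} (h : n < l) : T a b d l n = 0 := by
  have hempty : Sln (l + 1) n = ∅ := by
    rw [Finset.eq_empty_iff_forall_notMem]
    intro f hf
    obtain ⟨hsum, hanti⟩ := mem_Sln.1 hf
    have hsa : StrictAnti fun k : Fin (l + 1) => (f k).1 := fun k k' hk => hanti k k' hk
    have hcard : (Finset.univ : Finset (Fin (l + 1))).card ≤ (Finset.range (n + 1)).card := by
      apply Finset.card_le_card_of_injOn (fun k => (f k).1)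
      · intro k _
        have := hsum k
        exact Finset.mem_range.2 (by dsimp only; omega)
      · exact hsa.injective.injOn
    simp only [Finset.card_univ, Fintype.card_fin, Finset.card_range] at hcard
    omega
  rw [T, hempty, Finset.sum_empty]

lemma T_zero (a b d : ℕ → R) (n : ℕ) :
    T a b d 0 n = ∑ i ∈ Finset.range (n + 1), a i * b (n - i) := by
  rw [T]
  refine Finset.sum_nbij' (fun f => (f 0).1) (fun m => fun _ => (m, n - m)) ?_ ?_ ?_ ?_ ?_
  · intro f hf
    have := (mem_Sln.1 hf).1 0
    simp only [Finset.mem_range]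
    omega
  · intro m hm
    have hm' := Finset.mem_range.1 hm
    refine mem_Sln.2 ⟨fun k => ?_, fun k k' hk => ?_⟩
    · show m + (n - m) = n
      omega
    · have hkk : k = k' := Fin.ext (by omega)
      subst hkk
      exact absurd hk (lt_irrefl k)
  · intro f hf
    funext k
    have h0 : k = 0 := Fin.ext (by omega)
    subst h0
    have h2 := (mem_Sln.1 hf).1 0
    show ((f 0).1, n - (f 0).1) = f 0
    ext <;> simp <;> omega
  · intro m hm; rfl
  · intro f hf
    have := (mem_Sln.1 hf).1 0
    have hlast : (Fin.last 0) = (0 : Fin 1) := rfl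
    rw [hlast]
    simp only [Finset.univ_eq_empty, Finset.prod_empty, mul_one]
    have h2 : (f 0).2 = n - (f 0).1 := by omega
    rw [h2]

lemma T_succ (a b d : ℕ → R) (l n : ℕ) :
    T a b d (l + 1) n = ∑ j ∈ Finset.Icc 1 n, d j * T a b d l (n - j) := by
  have hrw : ∀ j ∈ Finset.Icc 1 n, d j * T a b d l (n - j) =
      ∑ g ∈ Sln (l + 1) (n - j), d j * (a (g (Fin.last l)).1 *
        (∏ k : Fin l, d ((g (Fin.castSucc k)).1 - (g (Fin.succ k)).1)) * b (g 0).2) := by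
    intro j _
    rw [T, Finset.mul_sum]
  rw [Finset.sum_congr rfl hrw, Finset.sum_sigma']
  rw [T]
  refine Finset.sum_nbij'
    (fun f => ⟨(f 0).1 - (f (Fin.succ 0)).1,
      fun k => ((f k.succ).1, (f k.succ).2 - ((f 0).1 - (f (Fin.succ 0)).1))⟩)
    (fun x => Fin.cases ((x.2 0).1 + x.1, (x.2 0).2) (fun k => ((x.2 k).1, (x.2 k).2 + x.1)))
    ?_ ?_ ?_ ?_ ?_
  · -- maps into sigma
    intro f hf
    obtain ⟨hsum, hanti⟩ := mem_Sln.1 hf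
    have h01 : (f (Fin.succ 0)).1 < (f 0).1 := hanti 0 (Fin.succ 0) (Fin.succ_pos 0)
    have h0n := hsum 0
    have hs0 := hsum (Fin.succ 0)
    set j := (f 0).1 - (f (Fin.succ 0)).1 with hj
    have hle : ∀ k : Fin (l + 1), (f k.succ).1 ≤ (f (Fin.succ 0)).1 := by
      intro k
      rcases eq_or_ne k 0 with rfl | hk
      · exact le_rfl
      · exact (hanti (Fin.succ 0) k.succ (Fin.succ_lt_succ_iff.2 (Fin.pos_of_ne_zero hk))).le
    refine Finset.mem_sigma.2 ⟨Finset.mem_Icc.2 (by dsimp only; omega), mem_Sln.2 ⟨?_, ?_⟩⟩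
    · intro k
      have := hsum k.succ
      have := hle k
      simp only
      omega
    · intro k k' hk
      exact hanti k.succ k'.succ (Fin.succ_lt_succ_iff.2 hk)
  · -- maps back
    rintro ⟨j, g⟩ hx
    obtain ⟨hj, hg⟩ := Finset.mem_sigma.1 hx
    rw [Finset.mem_Icc] at hj
    obtain ⟨hsum, hanti⟩ := mem_Sln.1 hg
    dsimp only at hsum hanti hj ⊢
    have hsub : ∀ k : Fin (l+1), (g k).1 + (g k).2 = n - j := hsum
    refine mem_Sln.2 ⟨?_, ?_⟩
    · intro k
      rcases Fin.eq_zero_or_eq_succ k with rfl | ⟨m, rfl⟩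
      · simp only [Fin.cases_zero]
        have := hsub 0
        omega
      · simp only [Fin.cases_succ]
        have := hsub m
        omega
    · intro k k' hk
      rcases Fin.eq_zero_or_eq_succ k' with rfl | ⟨m', rfl⟩
      · exact absurd hk (by simp)
      rcases Fin.eq_zero_or_eq_succ k with rfl | ⟨m, rfl⟩
      · simp only [Fin.cases_zero, Fin.cases_succ]
        have hle : (g m').1 ≤ (g 0).1 := by
          rcases eq_or_ne m' 0 with rfl | hm'
          · exact le_rfl
          · exact (hanti 0 m' (Fin.pos_of_ne_zero hm')).le
        have := hj.1
        omega
      · simp only [Fin.cases_succ]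
        exact hanti m m' (Fin.succ_lt_succ_iff.1 hk)
  · -- left inverse
    intro f hf
    dsimp only
    obtain ⟨hsum, hanti⟩ := mem_Sln.1 hf
    have h01 : (f (Fin.succ 0)).1 < (f 0).1 := hanti 0 (Fin.succ 0) (Fin.succ_pos 0)
    have h0n := hsum 0
    have hs0 := hsum (Fin.succ 0)
    have hle : ∀ k : Fin (l + 1), (f k.succ).1 ≤ (f (Fin.succ 0)).1 := by
      intro k
      rcases eq_or_ne k 0 with rfl | hk
      · exact le_rfl
      · exact (hanti (Fin.succ 0) k.succ (Fin.succ_lt_succ_iff.2 (Fin.pos_of_ne_zero hk))).le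
    funext k
    rcases Fin.eq_zero_or_eq_succ k with rfl | ⟨m, rfl⟩
    · rw [Fin.cases_zero]
      ext
      · dsimp only; omega
      · dsimp only; omega
    · rw [Fin.cases_succ]
      have h2 := hsum m.succ
      have h3 := hle m
      ext
      · dsimp only
      · dsimp only; omega
  · -- right inverse
    rintro ⟨j, g⟩ hx
    obtain ⟨hj, hg⟩ := Finset.mem_sigma.1 hx
    rw [Finset.mem_Icc] at hj
    obtain ⟨hsum, hanti⟩ := mem_Sln.1 hg
    dsimp only at hsum hanti hj ⊢
    have h1 : ∀ k : Fin (l + 1),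
        (Fin.cases (motive := fun _ => ℕ × ℕ) ((g 0).1 + j, (g 0).2)
          (fun k => ((g k).1, (g k).2 + j)) k.succ) = ((g k).1, (g k).2 + j) := by
      intro k; rw [Fin.cases_succ]
    refine Sigma.ext ?_ ?_
    · simp only [h1, Fin.cases_zero]
      omega
    · simp only [h1]
      refine heq_of_eq ?_
      funext k
      simp only [h1, Fin.cases_zero]
      ext <;> (try dsimp only) <;> omega
  · -- terms agree
    intro f hf
    dsimp only
    obtain ⟨hsum, hanti⟩ := mem_Sln.1 hf
    have h01 : (f (Fin.succ 0)).1 < (f 0).1 := hanti 0 (Fin.succ 0) (Fin.succ_pos 0)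
    have h0n := hsum 0
    have hs0 := hsum (Fin.succ 0)
    have hb : (f (Fin.succ 0)).2 - ((f 0).1 - (f (Fin.succ 0)).1) = (f 0).2 := by omega
    rw [Fin.prod_univ_succ, Fin.castSucc_zero]
    simp only [Fin.succ_castSucc, Fin.succ_last]
    rw [hb]
    ring

lemma coeff_pow_zero (f : PowerSeries R) (hf : constantCoeff f = 0) {m n : ℕ} (h : n < m) :
    coeff n (f ^ m) = 0 :=
  (X_pow_dvd_iff.mp (pow_dvd_pow_of_dvd (X_dvd_iff.mpr hf) m)) n h

/-- partial sums of the log series -/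
noncomputable def P (f : PowerSeries R) (N : ℕ) : PowerSeries R :=
  ∑ m ∈ Finset.range N, C (algebraMap ℚ R ((-1 : ℚ) ^ m / (m + 1))) * f ^ (m + 1)

lemma coeff_logOnePlus_eq (f : PowerSeries R) (hf : constantCoeff f = 0) {n N : ℕ}
    (h : n ≤ N) : coeff n (logOnePlus f) = coeff n (P f N) := by
  rw [logOnePlus, coeff_mk, P, map_sum]
  rw [← Finset.sum_subset (Finset.range_subset_range.2 h)]
  · exact Finset.sum_congr rfl fun m _ => by
      rw [coeff_C_mul, ← Algebra.smul_def]
  · intro m _ hm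
    rw [coeff_C_mul, coeff_pow_zero f hf (by simp only [Finset.mem_range] at hm; omega),
      mul_zero]

lemma constantCoeff_logOnePlus (f : PowerSeries R) :
    constantCoeff (logOnePlus f) = 0 := by
  rw [← coeff_zero_eq_constantCoeff, logOnePlus, coeff_mk]
  simp

lemma derivative_P (f : PowerSeries R) (N : ℕ) :
    d⁄dX R (P f N) = (∑ m ∈ Finset.range N, (-f) ^ m) * d⁄dX R f := by
  rw [P, map_sum, Finset.sum_mul]
  refine Finset.sum_congr rfl fun m _ => ?_
  rw [Derivation.leibniz, derivative_C, smul_zero, add_zero, smul_eq_mul,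
    Derivation.leibniz_pow]
  simp only [Nat.add_sub_cancel, smul_eq_mul, nsmul_eq_mul]
  have : ((m : R⟦X⟧) + 1) = C (algebraMap ℚ R ((m : ℚ) + 1)) := by
    push_cast
    simp [map_add, map_natCast]
  push_cast
  rw [this, ← mul_assoc, ← map_mul, ← map_mul]
  have hq : (-1 : ℚ) ^ m / (m + 1) * ((m : ℚ) + 1) = (-1 : ℚ) ^ m := by
    field_simp
  have h3 : C (algebraMap ℚ R ((-1 : ℚ) ^ m)) = (-1 : R⟦X⟧) ^ m := by
    rw [map_pow, map_pow, map_neg, map_neg, map_one, map_one]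
  rw [hq, h3, neg_pow]
  ring

lemma one_add_mul_derivative_P (f : PowerSeries R) (N : ℕ) :
    (1 + f) * d⁄dX R (P f N) = (1 - (-f) ^ N) * d⁄dX R f := by
  rw [derivative_P, ← mul_assoc]
  congr 1
  have := geom_sum_mul (-f) N
  have h2 : (1 + f) * ∑ m ∈ Finset.range N, (-f) ^ m
      = -((∑ m ∈ Finset.range N, (-f) ^ m) * (-f - 1)) := by ring
  rw [h2, this]
  ring

lemma one_add_mul_derivative_log (f : PowerSeries R) (hf : constantCoeff f = 0) :
    (1 + f) * d⁄dX R (logOnePlus f) = d⁄dX R f := by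
  ext n
  have h1 : coeff n ((1 + f) * d⁄dX R (logOnePlus f))
      = coeff n ((1 + f) * d⁄dX R (P f (n + 1))) := by
    rw [coeff_mul, coeff_mul]
    refine Finset.sum_congr rfl fun pq hpq => ?_
    have h2 : pq.2 ≤ n := by
      have := Finset.HasAntidiagonal.mem_antidiagonal.1 hpq; omega
    congr 1
    rw [coeff_derivative, coeff_derivative,
      coeff_logOnePlus_eq f hf (show pq.2 + 1 ≤ n + 1 by omega)]
  rw [h1, one_add_mul_derivative_P, sub_mul, one_mul, map_sub]
  have h3 : coeff n ((-f) ^ (n + 1) * d⁄dX R f) = 0 := by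
    rw [coeff_mul]
    refine Finset.sum_eq_zero fun pq hpq => ?_
    have h2 : pq.1 ≤ n := by
      have := Finset.HasAntidiagonal.mem_antidiagonal.1 hpq; omega
    rw [coeff_pow_zero (-f) (by simp [hf]) (show pq.1 < n + 1 by omega), zero_mul]
  rw [h3, sub_zero]


lemma nzsmul : NoZeroSMulDivisors ℕ R := by
  constructor
  intro n r h
  by_cases hn : n = 0
  · exact Or.inl hn
  right
  have h2 : ((n : ℚ)) • r = 0 := by rw [Nat.cast_smul_eq_nsmul]; exact h
  calc r = ((n : ℚ)⁻¹ * (n : ℚ)) • r := by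
            rw [inv_mul_cancel₀ (Nat.cast_ne_zero.2 hn), one_smul]
    _ = (n : ℚ)⁻¹ • (((n : ℚ)) • r) := mul_smul _ _ _
    _ = 0 := by rw [h2, smul_zero]

lemma isUnit_succ_cast (n : ℕ) : IsUnit ((n + 1 : ℕ) : R) := by
  have : ((n + 1 : ℕ) : R) = algebraMap ℚ R ((n + 1 : ℕ) : ℚ) := by
    rw [map_natCast]
  rw [this]
  exact (isUnit_iff_ne_zero.2 (by exact_mod_cast Nat.succ_ne_zero n)).map (algebraMap ℚ R)

lemma mul_derivative_log (F : PowerSeries R) (hF : constantCoeff F = 1) :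
    F * d⁄dX R (logOnePlus (F - 1)) = d⁄dX R F := by
  have h := one_add_mul_derivative_log (F - 1) (by simp [map_sub, hF])
  rw [show (1 : R⟦X⟧) + (F - 1) = F by ring] at h
  rw [h, map_sub]
  simp

lemma eq_of_cross (F G : R⟦X⟧) (hF : constantCoeff F = 1) (hG : constantCoeff G = 1)
    (h : G * d⁄dX R F = F * d⁄dX R G) : F = G := by
  have key : ∀ n, coeff n F = coeff n G := by
    intro n
    induction n using Nat.strong_induction_on with
    | _ n ih =>
      rcases n with _ | n
      · rw [coeff_zero_eq_constantCoeff]; rw [hF, hG]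
      · have hcoeff : coeff n (G * d⁄dX R F) = coeff n (F * d⁄dX R G) := by rw [h]
        rw [coeff_mul, coeff_mul] at hcoeff
        have h0n : ((0 : ℕ), n) ∈ antidiagonal n := by simp
        rw [← Finset.add_sum_erase _ _ h0n, ← Finset.add_sum_erase _ _ h0n] at hcoeff
        have hrest : ∑ pq ∈ (antidiagonal n).erase (0, n),
              coeff pq.1 G * coeff pq.2 (d⁄dX R F)
            = ∑ pq ∈ (antidiagonal n).erase (0, n),
              coeff pq.1 F * coeff pq.2 (d⁄dX R G) := by
          refine Finset.sum_congr rfl fun pq hpq => ?_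
          have hmem := Finset.HasAntidiagonal.mem_antidiagonal.1 (Finset.mem_of_mem_erase hpq)
          have hne := Finset.ne_of_mem_erase hpq
          have hp1 : 1 ≤ pq.1 := by
            rcases Nat.eq_zero_or_pos pq.1 with h1 | h1
            · exfalso; apply hne
              have h2 : pq.2 = n := by omega
              rw [Prod.ext_iff]; exact ⟨h1, h2⟩
            · exact h1
          rw [coeff_derivative, coeff_derivative, ih pq.1 (by omega),
            ih (pq.2 + 1) (by omega)]
        rw [hrest] at hcoeff
        have hmain := add_right_cancel hcoeff
        rw [coeff_zero_eq_constantCoeff, hF, hG, one_mul, one_mul, coeff_derivative,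
          coeff_derivative] at hmain
        have hu := isUnit_succ_cast (R := R) n
        apply hu.mul_right_cancel
        rw [Nat.cast_add, Nat.cast_one]
        exact hmain
  ext n
  exact key n

lemma logOnePlus_mul (F G : PowerSeries R) (hF : constantCoeff F = 1)
    (hG : constantCoeff G = 1) :
    logOnePlus (F * G - 1) = logOnePlus (F - 1) + logOnePlus (G - 1) := by
  haveI : NoZeroSMulDivisors ℕ R := nzsmul
  haveI : IsAddTorsionFree R := IsAddTorsionFree.of_module_rat R
  apply derivative.ext
  · have hFG : constantCoeff (F * G) = 1 := by rw [map_mul, hF, hG, one_mul]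
    have kFG := mul_derivative_log (F * G) hFG
    have kF := mul_derivative_log F hF
    have kG := mul_derivative_log G hG
    have hu : IsUnit (F * G) := isUnit_iff_constantCoeff.2 (by rw [hFG]; exact isUnit_one)
    apply hu.mul_left_cancel
    rw [map_add, mul_add, kFG]
    have e1 : F * G * d⁄dX R (logOnePlus (F - 1)) = G * d⁄dX R F := by
      rw [mul_comm F G, mul_assoc, kF]
    have e2 : F * G * d⁄dX R (logOnePlus (G - 1)) = F * d⁄dX R G := by
      rw [mul_assoc, kG]
    rw [e1, e2, Derivation.leibniz, smul_eq_mul, smul_eq_mul]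
    ring
  · rw [constantCoeff_logOnePlus, map_add, constantCoeff_logOnePlus,
      constantCoeff_logOnePlus, add_zero]

lemma log_iff_mul (A B C D : PowerSeries R) (hA : constantCoeff A = 1)
    (hB : constantCoeff B = 1) (hC : constantCoeff C = 1) (hD : constantCoeff D = 1) :
    (logOnePlus (C - 1) = logOnePlus (A - 1) + logOnePlus (B - 1) - logOnePlus (D - 1))
      ↔ C * D = A * B := by
  rw [eq_sub_iff_add_eq, ← logOnePlus_mul C D hC hD, ← logOnePlus_mul A B hA hB]
  constructor
  · intro h
    have hCD : constantCoeff (C * D) = 1 := by rw [map_mul, hC, hD, one_mul]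
    have hAB : constantCoeff (A * B) = 1 := by rw [map_mul, hA, hB, one_mul]
    refine eq_of_cross _ _ hCD hAB ?_
    have k1 := mul_derivative_log (C * D) hCD
    have k2 := mul_derivative_log (A * B) hAB
    calc A * B * d⁄dX R (C * D) = A * B * (C * D * d⁄dX R (logOnePlus (C * D - 1))) := by
          rw [k1]
      _ = C * D * (A * B * d⁄dX R (logOnePlus (A * B - 1))) := by rw [h]; ring
      _ = C * D * d⁄dX R (A * B) := by rw [k2]
  · intro h; rw [h]

lemma he_eq (a b d : ℕ → R) (ha : a 0 = 1) (hb : b 0 = 1) (m : ℕ) :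
    (if m = 0 then 1 else incExcSum a b d m)
      = ∑ l ∈ Finset.range (m + 1), (-1 : R) ^ l * T a b d l m := by
  rcases Nat.eq_zero_or_pos m with rfl | hm
  · rw [if_pos rfl, Finset.sum_range_one, pow_zero, one_mul, T_zero, Finset.sum_range_one,
      ha, hb, one_mul]
  · rw [if_neg (by omega), incExcSum_eq]

lemma DE_eq (a b d : ℕ → R) (ha : a 0 = 1) (hb : b 0 = 1) (hd : d 0 = 1) :
    PowerSeries.mk d * PowerSeries.mk (fun n => if n = 0 then 1 else incExcSum a b d n)
      = PowerSeries.mk a * PowerSeries.mk b := by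
  ext n
  rw [coeff_mul, coeff_mul, Finset.Nat.sum_antidiagonal_eq_sum_range_succ_mk,
    Finset.Nat.sum_antidiagonal_eq_sum_range_succ_mk]
  simp only [coeff_mk]
  simp only [he_eq a b d ha hb]
  rcases Nat.eq_zero_or_pos n with rfl | hn
  · simp [hd, T_zero, ha, hb]
  rw [← T_zero a b d n]
  have hsplit : Finset.range (n + 1) = insert 0 (Finset.Icc 1 n) := by
    ext x; simp; omega
  rw [hsplit, Finset.sum_insert (by simp), hd, one_mul, Nat.sub_zero]
  have hext : ∀ j ∈ Finset.Icc 1 n,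
      d j * ∑ l ∈ Finset.range (n - j + 1), (-1 : R) ^ l * T a b d l (n - j)
        = ∑ l ∈ Finset.range (n + 1), (-1 : R) ^ l * (d j * T a b d l (n - j)) := by
    intro j hj
    rw [Finset.mem_Icc] at hj
    rw [Finset.sum_subset (Finset.range_subset_range.2 (show n - j + 1 ≤ n + 1 by omega))]
    · rw [Finset.mul_sum]
      exact Finset.sum_congr rfl fun l _ => by ring
    · intro l _ hl
      rw [Finset.mem_range] at hl
      rw [T_eq_zero a b d (show n - j < l by omega), mul_zero]
  rw [Finset.sum_congr rfl hext, Finset.sum_comm]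
  have hT : ∀ l ∈ Finset.range (n + 1),
      ∑ j ∈ Finset.Icc 1 n, (-1 : R) ^ l * (d j * T a b d l (n - j))
        = (-1 : R) ^ l * T a b d (l + 1) n := by
    intro l _
    rw [T_succ, Finset.mul_sum]
  rw [Finset.sum_congr rfl hT]
  rw [Finset.sum_range_succ' (fun l => (-1 : R) ^ l * T a b d l n) n,
    Finset.sum_range_succ (fun l => (-1 : R) ^ l * T a b d (l + 1) n) n,
    T_eq_zero a b d (Nat.lt_succ_self n), mul_zero, add_zero, pow_zero, one_mul]
  have hz : (∑ l ∈ Finset.range n, (-1 : R) ^ (l + 1) * T a b d (l + 1) n)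
      + ∑ l ∈ Finset.range n, (-1 : R) ^ l * T a b d (l + 1) n = 0 := by
    rw [← Finset.sum_add_distrib]
    exact Finset.sum_eq_zero fun l _ => by ring
  linear_combination hz

end IncExc

theorem inclusion_exclusion_log {R : Type*} [CommRing R] [Algebra ℚ R]
    (a b c d : ℕ → R) (ha : a 0 = 1) (hb : b 0 = 1) (hc : c 0 = 1) (hd : d 0 = 1) :
    logOnePlus (PowerSeries.mk c - 1) =
        logOnePlus (PowerSeries.mk a - 1) + logOnePlus (PowerSeries.mk b - 1)
          - logOnePlus (PowerSeries.mk d - 1) ↔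
      ∀ n : ℕ, 1 ≤ n → c n = incExcSum a b d n := by
  have hcc : ∀ (f : ℕ → R), f 0 = 1 → constantCoeff (PowerSeries.mk f) = 1 := by
    intro f hf
    rw [← coeff_zero_eq_constantCoeff, coeff_mk, hf]
  rw [IncExc.log_iff_mul _ _ _ _ (hcc a ha) (hcc b hb) (hcc c hc) (hcc d hd)]
  have hDE := IncExc.DE_eq a b d ha hb hd
  set E : PowerSeries R := PowerSeries.mk (fun n => if n = 0 then 1 else incExcSum a b d n)
    with hE
  have hDu : IsUnit (PowerSeries.mk d) :=
    isUnit_iff_constantCoeff.2 (by rw [hcc d hd]; exact isUnit_one)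
  constructor
  · intro h n hn
    have hCE : PowerSeries.mk c = E := by
      apply hDu.mul_left_cancel
      rw [hDE, ← h, mul_comm]
    have h2 := congrArg (coeff n) hCE
    rw [coeff_mk, hE, coeff_mk, if_neg (by omega)] at h2
    exact h2
  · intro h
    have hCE : PowerSeries.mk c = E := by
      ext n
      rw [coeff_mk, hE, coeff_mk]
      rcases Nat.eq_zero_or_pos n with rfl | hn
      · rw [if_pos rfl, hc]
      · rw [if_neg (by omega)]
        exact h n hn
    rw [hCE, mul_comm, hDE]
end

section
/- Let R be a commutative ring and let (a_n)_{n\ge 1}, (b_n)_{n\ge 1}, (d_n)_{n\ge 1} be sequences in R. Set A = 1 + \sum_{n\ge 1} a_n Q^n, B = 1 + \sum_{n\ge 1} b_n Q^n, D = 1 + \sum_{n\ge 1} d_n Q^n in R[[Q]]. Then D is invertible in R[[Q]], and for every n \ge 1 the coefficient of Q^n in A\cdot B\cdot D^{-1} equals \sum_{l=1}^{n+1} (-1)^{l-1} \sum_{((i_1,j_1),\dots,(i_l,j_l)) \in S_l(n)} a_{i_l}\, d_{i_1-i_2}\, d_{i_2-i_3} \cdots d_{i_{l-1}-i_l}\,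 b_{j_1}, where by convention a_0 = b_0 = 1. -/
open PowerSeries Finset

section Aux

variable {R : Type*} [CommRing R]

/-- Sum over strictly decreasing sequences `i = i₁ > i₂ > ⋯ > i_{l+1} ≥ 0` of
`a_{i_{l+1}} · d_{i₁-i₂} ⋯ d_{i_l - i_{l+1}}`. -/
def hAux (a d : ℕ → R) : ℕ → ℕ → R
  | 0, i => a i
  | l + 1, i => ∑ i' ∈ Finset.range i, d (i - i') * hAux a d l i'

/-- Solution of the recursion `g n = a n - ∑_{i<n} d (n-i) g i`. -/
def gAux (a d : ℕ → R) : ℕ → R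
  | n => a n - ∑ i ∈ (Finset.range n).attach, d (n - i.1) * gAux a d i.1
  decreasing_by exact Finset.mem_range.mp i.2

lemma gAux_eq (a d : ℕ → R) (n : ℕ) :
    gAux a d n = a n - ∑ i ∈ Finset.range n, d (n - i) * gAux a d i := by
  rw [gAux, ← Finset.sum_attach (Finset.range n) (fun i => d (n - i) * gAux a d i)]

lemma hAux_eq_zero (a d : ℕ → R) : ∀ l i, i < l → hAux a d l i = 0 := by
  intro l
  induction l with
  | zero => intro i h; omega
  | succ l ih =>
    intro i h
    rw [hAux]
    refine Finset.sum_eq_zero fun i' hi' => ?_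
    rw [ih i' (by have := Finset.mem_range.mp hi'; omega), mul_zero]

lemma gAux_eq_sum (a d : ℕ → R) (i : ℕ) :
    gAux a d i = ∑ l ∈ Finset.range (i + 1), (-1 : R) ^ l * hAux a d l i := by
  induction i using Nat.strong_induction_on with
  | _ i ih =>
    rw [gAux_eq]
    have step : ∀ i' ∈ Finset.range i, d (i - i') * gAux a d i' =
        ∑ l ∈ Finset.range i, (-1 : R) ^ l * (d (i - i') * hAux a d l i') := by
      intro i' hi'
      have hi'i := Finset.mem_range.mp hi'
      rw [ih i' hi'i, Finset.mul_sum]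
      rw [Finset.sum_subset (Finset.range_subset_range.mpr hi'i)]
      · exact Finset.sum_congr rfl fun l _ => by ring
      · intro l _ hl
        rw [hAux_eq_zero a d l i' (by simp only [Finset.mem_range] at hl ⊢; omega)]
        ring
    rw [Finset.sum_congr rfl step, Finset.sum_comm]
    have hinner : ∀ l, ∑ i' ∈ Finset.range i, (-1 : R) ^ l * (d (i - i') * hAux a d l i')
        = (-1 : R) ^ l * hAux a d (l + 1) i := by
      intro l
      rw [hAux, Finset.mul_sum]
    rw [Finset.sum_congr rfl fun l _ => hinner l, Finset.sum_range_succ']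
    have h0 : hAux a d 0 i = a i := rfl
    simp only [pow_succ, pow_zero, one_mul, h0]
    have hneg : ∀ l ∈ Finset.range i, (-1 : R) ^ l * -1 * hAux a d (l + 1) i
        = -((-1 : R) ^ l * hAux a d (l + 1) i) := fun l _ => by ring
    rw [Finset.sum_congr rfl hneg, Finset.sum_neg_distrib]
    ring

end Aux

lemma mem_Sln {l n : ℕ} {f : Fin l → ℕ × ℕ} :
    f ∈ Sln l n ↔ (∀ k, (f k).1 + (f k).2 = n) ∧
      ∀ k k' : Fin l, k < k' → (f k').1 < (f k).1 := by
  simp only [Sln, Finset.mem_filter, Fintype.mem_piFinset, Finset.mem_product, Finset.mem_range]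
  constructor
  · rintro ⟨-, h⟩; exact h
  · rintro ⟨h1, h2⟩
    exact ⟨fun k => ⟨by have := h1 k; omega, by have := h1 k; omega⟩, h1, h2⟩

lemma sum_Ioc_comm {R : Type*} [CommRing R] (n : ℕ) (G : ℕ → ℕ → R) :
    ∑ i' ∈ Finset.range (n + 1), ∑ i ∈ Finset.Ioc i' n, G i' i
      = ∑ i ∈ Finset.range (n + 1), ∑ i' ∈ Finset.range i, G i' i := by
  have h1 : ∀ i' : ℕ, Finset.Ioc i' n = (Finset.range (n + 1)).filter (fun i => i' < i) := by
    intro i'; ext x; simp only [Finset.mem_Ioc, Finset.mem_filter, Finset.mem_range]; omega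
  simp only [h1, Finset.sum_filter]
  rw [Finset.sum_comm]
  refine Finset.sum_congr rfl fun i hi => ?_
  rw [← Finset.sum_filter]
  congr 1
  ext x
  simp only [Finset.mem_range, Finset.mem_filter] at hi ⊢
  omega

lemma sln_sum {R : Type*} [CommRing R] (a d : ℕ → R) (n : ℕ) :
    ∀ (l : ℕ) (w : ℕ → R),
      (∑ f ∈ Sln (l + 1) n,
        a (f (Fin.last l)).1 *
          (∏ k : Fin l, d ((f (Fin.castSucc k)).1 - (f (Fin.succ k)).1)) * w (f 0).1)
      = ∑ i ∈ Finset.range (n + 1), hAux a d l i * w i := by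
  intro l
  induction l with
  | zero =>
    intro w
    refine Finset.sum_nbij' (fun f => (f 0).1) (fun i => fun _ => (i, n - i)) ?_ ?_ ?_ ?_ ?_
    · intro f hf
      obtain ⟨h1, -⟩ := mem_Sln.mp hf
      have := h1 0
      simp only [Finset.mem_range]; omega
    · intro i hi
      simp only [Finset.mem_range] at hi
      refine mem_Sln.mpr ⟨fun k => by simp; omega, fun k k' hkk' => ?_⟩
      exact absurd hkk' (by omega)
    · intro f hf
      obtain ⟨h1, -⟩ := mem_Sln.mp hf
      funext k
      have hk : k = 0 := by omega
      subst hk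
      have := h1 0
      ext <;> simp <;> omega
    · intro i _; rfl
    · intro f hf
      simp [hAux]
  | succ l ih =>
    intro w
    have key : (∑ f ∈ Sln (l + 2) n,
        a (f (Fin.last (l + 1))).1 *
          (∏ k : Fin (l + 1), d ((f (Fin.castSucc k)).1 - (f (Fin.succ k)).1)) * w (f 0).1)
        = ∑ p ∈ (Sln (l + 1) n).sigma (fun f => Finset.Ioc (f 0).1 n),
            a (p.1 (Fin.last l)).1 *
              (∏ k : Fin l, d ((p.1 (Fin.castSucc k)).1 - (p.1 (Fin.succ k)).1)) *
              (d (p.2 - (p.1 0).1) * w p.2) := by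
      refine Finset.sum_nbij' (fun f => ⟨Fin.tail f, (f 0).1⟩)
        (fun p => Fin.cons (p.2, n - p.2) p.1) ?_ ?_ ?_ ?_ ?_
      · intro f hf
        obtain ⟨h1, h2⟩ := mem_Sln.mp hf
        refine Finset.mem_sigma.mpr ⟨mem_Sln.mpr ⟨fun k => h1 k.succ,
          fun k k' hkk' => h2 k.succ k'.succ (by exact Fin.succ_lt_succ_iff.mpr hkk')⟩, ?_⟩
        simp only [Finset.mem_Ioc, Fin.tail]
        constructor
        · exact h2 0 (Fin.succ 0) (by simp [Fin.lt_def])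
        · have := h1 0; omega
      · rintro ⟨f, i⟩ hp
        obtain ⟨hf, hi⟩ := Finset.mem_sigma.mp hp
        obtain ⟨h1, h2⟩ := mem_Sln.mp hf
        simp only [Finset.mem_Ioc] at hi
        have hflt : ∀ k : Fin (l + 1), (f k).1 < i := by
          intro k
          rcases eq_or_ne k 0 with rfl | hk
          · exact hi.1
          · exact lt_trans (h2 0 k (by
              simp only [Fin.lt_def]
              exact Nat.pos_of_ne_zero (fun h => hk (Fin.ext h)))) hi.1
        refine mem_Sln.mpr ⟨?_, ?_⟩
        · intro k
          dsimp only
          induction k using Fin.cases with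
          | zero => simp only [Fin.cons_zero]; omega
          | succ j => simp only [Fin.cons_succ]; exact h1 j
        · intro k k' hkk'
          dsimp only
          induction k' using Fin.cases with
          | zero => exact absurd hkk' (by simp [Fin.lt_def])
          | succ j' =>
            simp only [Fin.cons_succ]
            induction k using Fin.cases with
            | zero =>
              simp only [Fin.cons_zero]
              exact hflt j'
            | succ j =>
              simp only [Fin.cons_succ]
              exact h2 j j' (Fin.succ_lt_succ_iff.mp hkk')
      · intro f hf
        obtain ⟨h1, -⟩ := mem_Sln.mp hf
        have h0 : f 0 = ((f 0).1, n - (f 0).1) := by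
          have := h1 0; ext <;> simp <;> omega
        dsimp only
        funext k
        induction k using Fin.cases with
        | zero => rw [Fin.cons_zero, ← h0]
        | succ j => rw [Fin.cons_succ]; rfl
      · rintro ⟨f, i⟩ _
        dsimp only
        simp [Fin.tail_cons, Fin.cons_zero]
      · intro f hf
        simp only [Fin.tail]
        have hlast : f (Fin.last (l + 1)) = f (Fin.last l).succ := by
          rw [Fin.succ_last]
        have hprod : (∏ k : Fin (l + 1), d ((f (Fin.castSucc k)).1 - (f (Fin.succ k)).1))
            = d ((f 0).1 - (f (Fin.succ 0)).1) *
              ∏ k : Fin l, d ((f (Fin.castSucc k).succ).1 - (f (Fin.succ k).succ).1) := by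
          rw [Fin.prod_univ_succ]
          congr 1
          all_goals first
            | rfl
            | (refine Finset.prod_congr rfl fun k _ => ?_; rw [Fin.succ_castSucc])
        rw [hlast, hprod]
        ring
    rw [key, Finset.sum_sigma]
    have step : ∀ f ∈ Sln (l + 1) n,
        (∑ i ∈ Finset.Ioc (f 0).1 n,
          a (f (Fin.last l)).1 *
            (∏ k : Fin l, d ((f (Fin.castSucc k)).1 - (f (Fin.succ k)).1)) *
            (d (i - (f 0).1) * w i))
        = a (f (Fin.last l)).1 *
            (∏ k : Fin l, d ((f (Fin.castSucc k)).1 - (f (Fin.succ k)).1)) *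
            ((fun j => ∑ i ∈ Finset.Ioc j n, d (i - j) * w i) (f 0).1) := by
      intro f _
      rw [Finset.mul_sum]
    rw [Finset.sum_congr rfl step, ih (fun j => ∑ i ∈ Finset.Ioc j n, d (i - j) * w i)]
    have swap : ∑ i' ∈ Finset.range (n + 1),
        hAux a d l i' * (∑ i ∈ Finset.Ioc i' n, d (i - i') * w i)
        = ∑ i ∈ Finset.range (n + 1),
            (∑ i' ∈ Finset.range i, hAux a d l i' * (d (i - i') * w i)) := by
      simp_rw [Finset.mul_sum]
      exact sum_Ioc_comm n (fun i' i => hAux a d l i' * (d (i - i') * w i))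
    rw [swap]
    refine Finset.sum_congr rfl fun i _ => ?_
    rw [hAux, Finset.sum_mul]
    exact Finset.sum_congr rfl fun i' _ => by ring

theorem coeff_mul_mul_inv_eq_incExcSum {R : Type*} [CommRing R]
    (a b d : ℕ → R) (ha : a 0 = 1) (hb : b 0 = 1) (hd : d 0 = 1) :
    IsUnit (PowerSeries.mk d) ∧
      ∀ E : PowerSeries R, PowerSeries.mk d * E = 1 →
        ∀ n : ℕ, 1 ≤ n →
          PowerSeries.coeff n (PowerSeries.mk a * PowerSeries.mk b * E) =
            incExcSum a b d n := by
  constructor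
  · rw [PowerSeries.isUnit_iff_constantCoeff]
    simp [hd]
  · intro E hE n _
    set g := gAux a d with hg
    have hDG : PowerSeries.mk d * PowerSeries.mk g = PowerSeries.mk a := by
      ext m
      rw [PowerSeries.coeff_mul]
      simp only [PowerSeries.coeff_mk]
      rw [Finset.Nat.sum_antidiagonal_eq_sum_range_succ (fun i j => d i * g j)]
      have hrefl : ∑ k ∈ Finset.range (m + 1), d k * g (m - k)
          = ∑ k ∈ Finset.range (m + 1), d (m - k) * g k := by
        rw [← Finset.sum_range_reflect]
        refine Finset.sum_congr rfl fun k hk => ?_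
        have hkm := Finset.mem_range.mp hk
        rw [show m + 1 - 1 - k = m - k by omega, show m - (m - k) = k by omega]
      rw [hrefl, Finset.sum_range_succ, Nat.sub_self, hd, one_mul, hg, gAux_eq a d m]
      ring
    have hABE : PowerSeries.mk a * PowerSeries.mk b * E
        = PowerSeries.mk g * PowerSeries.mk b := by
      calc PowerSeries.mk a * PowerSeries.mk b * E
          = (PowerSeries.mk d * PowerSeries.mk g) * PowerSeries.mk b * E := by rw [hDG]
        _ = PowerSeries.mk g * PowerSeries.mk b * (PowerSeries.mk d * E) := by ring
        _ = PowerSeries.mk g * PowerSeries.mk b := by rw [hE, mul_one]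
    rw [hABE, PowerSeries.coeff_mul]
    simp only [PowerSeries.coeff_mk]
    rw [Finset.Nat.sum_antidiagonal_eq_sum_range_succ (fun i j => g i * b j)]
    rw [incExcSum]
    have hinner : ∀ l ∈ Finset.range (n + 1),
        (-1 : R) ^ l * (∑ f ∈ Sln (l + 1) n,
          a (f (Fin.last l)).1 *
            (∏ k : Fin l, d ((f (Fin.castSucc k)).1 - (f (Fin.succ k)).1)) * b (f 0).2)
        = (-1 : R) ^ l * ∑ i ∈ Finset.range (n + 1), hAux a d l i * b (n - i) := by
      intro l _
      congr 1
      rw [← sln_sum a d n l (fun i => b (n - i))]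
      refine Finset.sum_congr rfl fun f hf => ?_
      obtain ⟨h1, -⟩ := mem_Sln.mp hf
      have := h1 0
      congr 2
      omega
    rw [Finset.sum_congr rfl hinner]
    simp_rw [Finset.mul_sum]
    rw [Finset.sum_comm]
    refine Finset.sum_congr rfl fun i hi => ?_
    have hi' := Finset.mem_range.mp hi
    have htrunc : ∑ l ∈ Finset.range (n + 1), (-1 : R) ^ l * (hAux a d l i * b (n - i))
        = (∑ l ∈ Finset.range (i + 1), (-1 : R) ^ l * hAux a d l i) * b (n - i) := by
      rw [Finset.sum_mul, ← Finset.sum_subset (Finset.range_subset_range.mpr (by omega :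
          i + 1 ≤ n + 1))]
      · exact Finset.sum_congr rfl fun l _ => by ring
      · intro l _ hl
        rw [hAux_eq_zero a d l i (by simp only [Finset.mem_range] at hl; omega)]
        ring
    rw [htrunc, hg, gAux_eq_sum a d i]
end
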